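/- If μ and ν are Borel probability measures supported on [−R, R], then for all n ∈ ℕ, H(μ ∗ ν, 𝒟_n) ≥ H(μ, 𝒟_n) − O_R(1), where μ ∗ ν denotes convolution and 𝒟_n the n-level dyadic partition of ℝ. -/

import Mathlib

open MeasureTheory
open scoped ENNReal

/-- The level-`n` dyadic interval `[j/2^n, (j+1)/2^n)`. -/
def dyadicInterval (n : ℕ) (j : ℤ) : Set ℝ :=
  Set.Ico ((j : ℝ) / 2 ^ n) (((j : ℝ) + 1) / 2 ^ n)

/-- Shannon entropy of a measure with respect to the level-`n` dyadic partition. -/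
noncomputable def dyadicEntropy (n : ℕ) (ν : Measure ℝ) : ℝ :=
  ∑' j : ℤ, Real.negMulLog (ν (dyadicInterval n j)).toReal

/-- Convolution of two Borel measures on `ℝ`. -/
noncomputable def convMeasure (μ ν : Measure ℝ) : Measure ℝ :=
  Measure.map (fun p : ℝ × ℝ => p.1 + p.2) (μ.prod ν)

lemma negMulLog_add_le' {a b : ℝ} (ha : 0 ≤ a) (hb : 0 ≤ b) :
    Real.negMulLog (a + b) ≤ Real.negMulLog a + Real.negMulLog b := by
  have key : ∀ x y : ℝ, 0 ≤ x → 0 ≤ y → -x * Real.log (x + y) ≤ Real.negMulLog x := by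
    intro x y hx hy
    rcases eq_or_lt_of_le hx with h | h
    · simp [← h, Real.negMulLog]
    · rw [Real.negMulLog, neg_mul, neg_mul, neg_le_neg_iff]
      exact mul_le_mul_of_nonneg_left (Real.log_le_log h (by linarith)) hx
  have h1 := key a b ha hb
  have h2 := key b a hb ha
  have : Real.negMulLog (a+b) = -a * Real.log (a+b) + -b * Real.log (b+a) := by
    rw [Real.negMulLog]; ring_nf
  rw [this]
  linarith

lemma split_penalty {a b : ℝ} (ha : 0 ≤ a) (hb : 0 ≤ b) :
    Real.negMulLog a + Real.negMulLog b ≤ Real.negMulLog (a + b) + (a + b) * Real.log 2 := by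
  -- key: x * log((a+b)/x) ≤ ... use log y ≤ y - 1
  have key : ∀ x : ℝ, 0 ≤ x → x ≤ a + b →
      Real.negMulLog x + x * Real.log (a+b) ≤ x * Real.log 2 + (a+b)/2 - x := by
    intro x hx hxs
    rcases eq_or_lt_of_le hx with h | h
    · simp [← h, Real.negMulLog]; positivity
    · have hs : 0 < a + b := lt_of_lt_of_le h hxs
      have hlog : Real.log ((a+b)/(2*x)) ≤ (a+b)/(2*x) - 1 :=
        Real.log_le_sub_one_of_pos (by positivity)
      have : x * Real.log ((a+b)/(2*x)) ≤ x * ((a+b)/(2*x) - 1) :=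
        mul_le_mul_of_nonneg_left hlog hx
      have hrw : Real.log ((a+b)/(2*x)) = Real.log (a+b) - Real.log 2 - Real.log x := by
        rw [Real.log_div hs.ne' (by positivity), Real.log_mul (by norm_num) h.ne']
        ring
      have hx' : x * ((a+b)/(2*x) - 1) = (a+b)/2 - x := by field_simp
      rw [hrw] at this
      rw [Real.negMulLog]
      nlinarith
  have h1 := key a ha (by linarith)
  have h2 := key b hb (by linarith)
  rcases eq_or_lt_of_le (add_nonneg ha hb) with h | h
  · have ha0 : a = 0 := by linarith
    have hb0 : b = 0 := by linarith
    simp [ha0, hb0]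
  · have : Real.negMulLog (a+b) = -(a+b) * Real.log (a+b) := rfl
    nlinarith

lemma mem_dyadicInterval_iff {n : ℕ} {j : ℤ} {x : ℝ} :
    x ∈ dyadicInterval n j ↔ ⌊(2 ^ n : ℝ) * x⌋ = j := by
  have h2 : (0:ℝ) < 2 ^ n := by positivity
  rw [dyadicInterval, Set.mem_Ico, Int.floor_eq_iff, div_le_iff₀ h2, lt_div_iff₀ h2]
  constructor
  · rintro ⟨h1', h2'⟩; constructor <;> nlinarith
  · rintro ⟨h1', h2'⟩; constructor <;> nlinarith

lemma measurableSet_dyadicInterval (n : ℕ) (j : ℤ) : MeasurableSet (dyadicInterval n j) :=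
  measurableSet_Ico

lemma floor_add_cases (u s : ℝ) : ⌊u + s⌋ = ⌊u⌋ + ⌊s⌋ ∨ ⌊u + s⌋ = ⌊u⌋ + ⌊s⌋ + 1 := by
  have h1 : (⌊u⌋ + ⌊s⌋ : ℤ) ≤ ⌊u + s⌋ := by
    rw [Int.le_floor]; push_cast; exact add_le_add (Int.floor_le u) (Int.floor_le s)
  have h2 : ⌊u + s⌋ < ⌊u⌋ + ⌊s⌋ + 2 := by
    rw [Int.floor_lt]; push_cast
    have := Int.lt_floor_add_one u; have := Int.lt_floor_add_one s; linarith
  omega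

lemma null_of_disjoint {μ : Measure ℝ} [IsProbabilityMeasure μ] {R : ℝ}
    (hsupp : μ (Set.Icc (-R) R) = 1) {s : Set ℝ} (h : s ∩ Set.Icc (-R) R = ∅) : μ s = 0 := by
  have hc : μ (Set.Icc (-R) R)ᶜ = 0 := by
    rw [measure_compl measurableSet_Icc (measure_ne_top μ _), hsupp, measure_univ, tsub_self]
  refine measure_mono_null ?_ hc
  rw [Set.subset_compl_iff_disjoint_right, Set.disjoint_iff_inter_eq_empty]
  exact h

lemma nonempty_inter_of_ne_zero {μ : Measure ℝ} [IsProbabilityMeasure μ] {R : ℝ}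
    (hsupp : μ (Set.Icc (-R) R) = 1) {s : Set ℝ} (h : μ s ≠ 0) :
    (s ∩ Set.Icc (-R) R).Nonempty := by
  by_contra h'
  exact h (null_of_disjoint hsupp (Set.not_nonempty_iff_eq_empty.mp h'))

lemma mem_floorIcc_of_mem {n : ℕ} {j : ℤ} {A z : ℝ} (hz : z ∈ dyadicInterval n j)
    (h1 : -A ≤ z) (h2 : z ≤ A) :
    j ∈ Finset.Icc ⌊(2 ^ n : ℝ) * (-A)⌋ ⌊(2 ^ n : ℝ) * A⌋ := by
  have h2n : (0:ℝ) ≤ 2 ^ n := by positivity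
  rw [mem_dyadicInterval_iff] at hz
  rw [Finset.mem_Icc, ← hz]
  exact ⟨Int.floor_le_floor (by nlinarith), Int.floor_le_floor (by nlinarith)⟩
lemma negMulLog_le_one {x : ℝ} (hx : 0 ≤ x) : Real.negMulLog x ≤ 1 := by
  rcases eq_or_lt_of_le hx with h | h
  · simp [← h]
  · have hlog : Real.log x⁻¹ ≤ x⁻¹ - 1 := Real.log_le_sub_one_of_pos (by positivity)
    rw [Real.log_inv] at hlog
    have h1 : -Real.log x ≤ x⁻¹ - 1 := by linarith
    have h2 : x * (-Real.log x) ≤ x * (x⁻¹ - 1) := mul_le_mul_of_nonneg_left h1 hx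
    have h3 : x * (x⁻¹ - 1) = 1 - x := by field_simp
    rw [Real.negMulLog, neg_mul]
    nlinarith [h2]

set_option maxHeartbeats 1000000 in
lemma translate_entropy_ge (μ : Measure ℝ) [IsProbabilityMeasure μ] {R : ℝ}
    (hsupp : μ (Set.Icc (-R) R) = 1) (n : ℕ) (t : ℝ) :
    (∑' k : ℤ, Real.negMulLog (μ (dyadicInterval n k)).toReal) - Real.log 2 ≤
      ∑' j : ℤ, Real.negMulLog (μ ((fun x => x + t) ⁻¹' dyadicInterval n j)).toReal := by
  set m : ℤ := ⌊(2 ^ n : ℝ) * t⌋ with hm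
  set T : ℤ → Set ℝ := fun j => (fun x => x + t) ⁻¹' dyadicInterval n j with hT
  have hTmeas : ∀ j, MeasurableSet (T j) :=
    fun j => (measurableSet_dyadicInterval n j).preimage (measurable_add_const t)
  have hmemT : ∀ (j : ℤ) (x : ℝ), x ∈ T j ↔ ⌊(2^n : ℝ) * x + (2^n : ℝ) * t⌋ = j := by
    intro j x
    rw [hT]; simp only [Set.mem_preimage]
    rw [mem_dyadicInterval_iff, mul_add]
  set a : ℤ → ℝ := fun k => (μ (T (k + m) ∩ dyadicInterval n k)).toReal with ha
  set b : ℤ → ℝ := fun k => (μ (T (k + m + 1) ∩ dyadicInterval n k)).toReal with hb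
  set c : ℤ → ℝ := fun k => (μ (dyadicInterval n k)).toReal with hc
  set c' : ℤ → ℝ := fun j => (μ (T j)).toReal with hc'
  have ha0 : ∀ k, 0 ≤ a k := fun k => ENNReal.toReal_nonneg
  have hb0 : ∀ k, 0 ≤ b k := fun k => ENNReal.toReal_nonneg
  have hc0 : ∀ k, 0 ≤ c k := fun k => ENNReal.toReal_nonneg
  have hc'0 : ∀ j, 0 ≤ c' j := fun j => ENNReal.toReal_nonneg
  -- F1 : c = a + b
  have hF1 : ∀ k, c k = a k + b k := by
    intro k
    have hcover : dyadicInterval n k =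
        (T (k + m) ∩ dyadicInterval n k) ∪ (T (k + m + 1) ∩ dyadicInterval n k) := by
      ext x
      simp only [Set.mem_union, Set.mem_inter_iff]
      constructor
      · intro hx
        have hfx : ⌊(2^n : ℝ) * x⌋ = k := mem_dyadicInterval_iff.mp hx
        rcases floor_add_cases ((2^n : ℝ) * x) ((2^n : ℝ) * t) with h | h
        · exact Or.inl ⟨(hmemT _ x).mpr (by rw [h, hfx]), hx⟩
        · exact Or.inr ⟨(hmemT _ x).mpr (by rw [h, hfx]), hx⟩
      · rintro (⟨_, hx⟩ | ⟨_, hx⟩) <;> exact hx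
    have hdisj : Disjoint (T (k + m) ∩ dyadicInterval n k)
        (T (k + m + 1) ∩ dyadicInterval n k) := by
      rw [Set.disjoint_left]
      rintro x ⟨hx1, -⟩ ⟨hx2, -⟩
      have h1 := (hmemT _ x).mp hx1
      have h2 := (hmemT _ x).mp hx2
      omega
    have hmu := measure_union (μ := μ) hdisj ((hTmeas (k+m+1)).inter (measurableSet_dyadicInterval n k))
    rw [← hcover] at hmu
    show (μ (dyadicInterval n k)).toReal = a k + b k
    rw [hmu, ENNReal.toReal_add (measure_ne_top μ _) (measure_ne_top μ _)]
  -- F2 : c' j = a (j - m) + b (j - (m+1))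
  have hF2 : ∀ j, c' j = a (j - m) + b (j - (m + 1)) := by
    intro j
    have e1 : j - m + m = j := by ring
    have e2 : j - (m + 1) + m + 1 = j := by ring
    have hcover : T j = (T j ∩ dyadicInterval n (j - m)) ∪ (T j ∩ dyadicInterval n (j - (m+1))) := by
      ext x
      simp only [Set.mem_union, Set.mem_inter_iff]
      constructor
      · intro hx
        have hfx : ⌊(2^n : ℝ) * x + (2^n : ℝ) * t⌋ = j := (hmemT _ x).mp hx
        rcases floor_add_cases ((2^n : ℝ) * x) ((2^n : ℝ) * t) with h | h
        · exact Or.inl ⟨hx, mem_dyadicInterval_iff.mpr (by omega)⟩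
        · exact Or.inr ⟨hx, mem_dyadicInterval_iff.mpr (by omega)⟩
      · rintro (⟨hx, -⟩ | ⟨hx, -⟩) <;> exact hx
    have hdisj : Disjoint (T j ∩ dyadicInterval n (j - m))
        (T j ∩ dyadicInterval n (j - (m+1))) := by
      rw [Set.disjoint_left]
      rintro x ⟨-, hx1⟩ ⟨-, hx2⟩
      have h1 := mem_dyadicInterval_iff.mp hx1
      have h2 := mem_dyadicInterval_iff.mp hx2
      omega
    have hmu := measure_union (μ := μ) hdisj
      ((hTmeas j).inter (measurableSet_dyadicInterval n (j - (m+1))))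
    rw [← hcover] at hmu
    show (μ (T j)).toReal = a (j - m) + b (j - (m+1))
    rw [hmu, ENNReal.toReal_add (measure_ne_top μ _) (measure_ne_top μ _)]
    have ea : a (j - m) = (μ (T j ∩ dyadicInterval n (j - m))).toReal := by
      show (μ (T (j - m + m) ∩ dyadicInterval n (j - m))).toReal = _
      rw [e1, Set.inter_comm]
    have eb : b (j - (m+1)) = (μ (T j ∩ dyadicInterval n (j - (m+1)))).toReal := by
      show (μ (T (j - (m+1) + m + 1) ∩ dyadicInterval n (j - (m+1)))).toReal = _
      rw [e2, Set.inter_comm]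
    rw [ea, eb]
  -- supports
  set Fc : Finset ℤ := Finset.Icc ⌊(2 ^ n : ℝ) * (-R)⌋ ⌊(2 ^ n : ℝ) * R⌋ with hFc
  have hI0 : ∀ k ∉ Fc, μ (dyadicInterval n k) = 0 := by
    intro k hk
    by_contra hne
    obtain ⟨x, hx1, hx2⟩ := nonempty_inter_of_ne_zero hsupp hne
    exact hk (mem_floorIcc_of_mem hx1 hx2.1 hx2.2)
  have hc_supp : ∀ k ∉ Fc, c k = 0 := by
    intro k hk
    show (μ (dyadicInterval n k)).toReal = 0
    rw [hI0 k hk]; simp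
  have ha_supp : ∀ k ∉ Fc, a k = 0 := by
    intro k hk
    show (μ (T (k + m) ∩ dyadicInterval n k)).toReal = 0
    rw [measure_mono_null Set.inter_subset_right (hI0 k hk)]; simp
  have hb_supp : ∀ k ∉ Fc, b k = 0 := by
    intro k hk
    show (μ (T (k + m + 1) ∩ dyadicInterval n k)).toReal = 0
    rw [measure_mono_null Set.inter_subset_right (hI0 k hk)]; simp
  set Fc' : Finset ℤ := Finset.Icc ⌊(2 ^ n : ℝ) * (-R) + (2^n : ℝ) * t⌋
      ⌊(2 ^ n : ℝ) * R + (2^n : ℝ) * t⌋ with hFc'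
  have hc'_supp : ∀ j ∉ Fc', c' j = 0 := by
    intro j hj
    show (μ (T j)).toReal = 0
    have hT0 : μ (T j) = 0 := by
      by_contra hne
      exfalso
      obtain ⟨x, hx1, hx2⟩ := nonempty_inter_of_ne_zero hsupp hne
      have hfx : ⌊(2^n : ℝ) * x + (2^n : ℝ) * t⌋ = j := (hmemT _ x).mp hx1
      apply hj
      rw [hFc', Finset.mem_Icc, ← hfx]
      have h2n : (0:ℝ) ≤ 2 ^ n := by positivity
      obtain ⟨hxl, hxr⟩ := hx2
      constructor
      · exact Int.floor_le_floor (by nlinarith)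
      · exact Int.floor_le_floor (by nlinarith)
    rw [hT0]; simp
  have hgoal : ((∑' k : ℤ, Real.negMulLog (μ (dyadicInterval n k)).toReal) - Real.log 2 ≤
      ∑' j : ℤ, Real.negMulLog (μ ((fun x => x + t) ⁻¹' dyadicInterval n j)).toReal) =
      ((∑' k, Real.negMulLog (c k)) - Real.log 2 ≤ ∑' j, Real.negMulLog (c' j)) := rfl
  rw [hgoal]
  have hc'eq : ∀ j, c' j = (μ (T j)).toReal := fun _ => rfl
  clear hI0 hm hT ha hb hc hc'
  clear_value m T a b c c'
  -- summabilities
  have hsa : Summable (fun k => Real.negMulLog (a k)) :=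
    summable_of_ne_finset_zero (s := Fc) (fun k hk => by rw [ha_supp k hk]; simp)
  have hsb : Summable (fun k => Real.negMulLog (b k)) :=
    summable_of_ne_finset_zero (s := Fc) (fun k hk => by rw [hb_supp k hk]; simp)
  have hsc : Summable (fun k => Real.negMulLog (c k)) :=
    summable_of_ne_finset_zero (s := Fc) (fun k hk => by rw [hc_supp k hk]; simp)
  have hsc' : Summable c' :=
    summable_of_ne_finset_zero (s := Fc') (fun j hj => hc'_supp j hj)
  have hsnc' : Summable (fun j => Real.negMulLog (c' j)) :=
    summable_of_ne_finset_zero (s := Fc') (fun j hj => by rw [hc'_supp j hj]; simp)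
  -- step 1
  have step1 : ∑' k, Real.negMulLog (c k) ≤
      (∑' k, Real.negMulLog (a k)) + ∑' k, Real.negMulLog (b k) := by
    rw [← Summable.tsum_add hsa hsb]
    exact hsc.tsum_le_tsum (fun k => by rw [hF1 k]; exact negMulLog_add_le' (ha0 k) (hb0 k))
      (hsa.add hsb)
  -- shifts
  have hshift_a : ∑' j : ℤ, Real.negMulLog (a (j - m)) = ∑' k, Real.negMulLog (a k) :=
    (Equiv.subRight m).tsum_eq (fun k => Real.negMulLog (a k))
  have hshift_b : ∑' j : ℤ, Real.negMulLog (b (j - (m+1))) = ∑' k, Real.negMulLog (b k) :=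
    (Equiv.subRight (m+1)).tsum_eq (fun k => Real.negMulLog (b k))
  have hsa' : Summable (fun j : ℤ => Real.negMulLog (a (j - m))) := by
    apply summable_of_ne_finset_zero
      (s := Finset.Icc (⌊(2 ^ n : ℝ) * (-R)⌋ + m) (⌊(2 ^ n : ℝ) * R⌋ + m))
    intro j hj
    have : j - m ∉ Fc := by
      rw [hFc, Finset.mem_Icc]
      rw [Finset.mem_Icc] at hj
      omega
    rw [ha_supp _ this]; simp
  have hsb' : Summable (fun j : ℤ => Real.negMulLog (b (j - (m+1)))) := by
    apply summable_of_ne_finset_zero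
      (s := Finset.Icc (⌊(2 ^ n : ℝ) * (-R)⌋ + (m+1)) (⌊(2 ^ n : ℝ) * R⌋ + (m+1)))
    intro j hj
    have : j - (m+1) ∉ Fc := by
      rw [hFc, Finset.mem_Icc]
      rw [Finset.mem_Icc] at hj
      omega
    rw [hb_supp _ this]; simp
  -- total mass of c'
  have hsum_c' : ∑' j, c' j ≤ 1 := by
    apply hsc'.tsum_le_of_sum_le
    intro F
    have hdisj : (F : Set ℤ).PairwiseDisjoint T := by
      intro i _ j _ hij
      rw [Function.onFun, Set.disjoint_left]
      intro x hxi hxj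
      have h1 := (hmemT i x).mp hxi
      have h2 := (hmemT j x).mp hxj
      exact hij (by omega)
    have : ∑ j ∈ F, c' j = (μ (⋃ j ∈ F, T j)).toReal := by
      rw [measure_biUnion_finset hdisj (fun j _ => hTmeas j), ENNReal.toReal_sum
        (fun j _ => measure_ne_top μ _)]
      exact Finset.sum_congr rfl (fun j _ => hc'eq j)
    rw [this]
    calc (μ (⋃ j ∈ F, T j)).toReal ≤ (μ Set.univ).toReal :=
          ENNReal.toReal_mono (measure_ne_top μ _) (measure_mono (Set.subset_univ _))
      _ = 1 := by simp
  -- step 2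
  have step2 : (∑' k, Real.negMulLog (a k)) + (∑' k, Real.negMulLog (b k))
      - Real.log 2 * ∑' j, c' j ≤ ∑' j, Real.negMulLog (c' j) := by
    have hper : ∀ j : ℤ, Real.negMulLog (a (j - m)) + Real.negMulLog (b (j - (m+1)))
        - c' j * Real.log 2 ≤ Real.negMulLog (c' j) := by
      intro j
      have := split_penalty (ha0 (j - m)) (hb0 (j - (m+1)))
      rw [← hF2 j] at this
      linarith
    have hsl : Summable (fun j : ℤ => Real.negMulLog (a (j - m))
        + Real.negMulLog (b (j - (m+1))) - c' j * Real.log 2) :=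
      (hsa'.add hsb').sub (hsc'.mul_right _)
    have := hsl.tsum_le_tsum hper hsnc'
    rw [Summable.tsum_sub (hsa'.add hsb') (hsc'.mul_right _), Summable.tsum_add hsa' hsb',
      hshift_a, hshift_b, tsum_mul_right] at this
    linarith [this]
  have hlog2 : (0:ℝ) ≤ Real.log 2 := Real.log_nonneg (by norm_num)
  have : Real.log 2 * ∑' j, c' j ≤ Real.log 2 :=
    (mul_le_of_le_one_right hlog2 hsum_c').trans_eq rfl
  have goal : (∑' k, Real.negMulLog (c k)) - Real.log 2 ≤ ∑' j, Real.negMulLog (c' j) := by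
    linarith
  exact goal

/-- If `μ, ν` are probability measures supported on `[−R,R]`, then for all `n`,
`H(μ ∗ ν, 𝒟ₙ) ≥ H(μ, 𝒟ₙ) − O_R(1)`. -/
theorem dyadicEntropy_conv_ge (R : ℝ) (hR : 0 < R) :
    ∃ K : ℝ, ∀ (μ ν : Measure ℝ), IsProbabilityMeasure μ → IsProbabilityMeasure ν →
      μ (Set.Icc (-R) R) = 1 → ν (Set.Icc (-R) R) = 1 → ∀ n : ℕ,
        dyadicEntropy n μ - K ≤ dyadicEntropy n (convMeasure μ ν) := by
  refine ⟨Real.log 2, ?_⟩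
  intro μ ν hμ hν hμs hνs n
  have hadd : Measurable (fun p : ℝ × ℝ => p.1 + p.2) := measurable_fst.add measurable_snd
  have hconvprob : IsProbabilityMeasure (convMeasure μ ν) := by
    unfold convMeasure; exact Measure.isProbabilityMeasure_map hadd.aemeasurable
  have hIm : ∀ j, MeasurableSet (dyadicInterval n j) := measurableSet_dyadicInterval n
  have hsm : ∀ j : ℤ, MeasurableSet ((fun p : ℝ × ℝ => p.1 + p.2) ⁻¹' dyadicInterval n j) :=
    fun j => (hIm j).preimage hadd
  have hconv_apply : ∀ j, convMeasure μ ν (dyadicInterval n j) =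
      ∫⁻ y, μ ((fun x => x + y) ⁻¹' dyadicInterval n j) ∂ν := by
    intro j
    rw [convMeasure, Measure.map_apply hadd (hIm j), Measure.prod_apply_symm (hsm j)]
    rfl
  have hgmeas : ∀ j : ℤ,
      Measurable (fun y => (μ ((fun x => x + y) ⁻¹' dyadicInterval n j)).toReal) :=
    fun j => (measurable_measure_prodMk_right (hsm j)).ennreal_toReal
  have hg0 : ∀ (j : ℤ) (y : ℝ), 0 ≤ (μ ((fun x => x + y) ⁻¹' dyadicInterval n j)).toReal :=
    fun j y => ENNReal.toReal_nonneg
  have hg1 : ∀ (j : ℤ) (y : ℝ), (μ ((fun x => x + y) ⁻¹' dyadicInterval n j)).toReal ≤ 1 := by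
    intro j y
    calc (μ ((fun x => x + y) ⁻¹' dyadicInterval n j)).toReal
        ≤ (1 : ℝ≥0∞).toReal := ENNReal.toReal_mono ENNReal.one_ne_top prob_le_one
      _ = 1 := by simp
  have hint_g : ∀ j : ℤ,
      Integrable (fun y => (μ ((fun x => x + y) ⁻¹' dyadicInterval n j)).toReal) ν :=
    fun j => (integrable_const 1).mono' (hgmeas j).aestronglyMeasurable
      (Filter.Eventually.of_forall fun y => by
        rw [Real.norm_eq_abs, abs_of_nonneg (hg0 j y)]; exact hg1 j y)
  have hint_h : ∀ j : ℤ,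
      Integrable (fun y =>
        Real.negMulLog (μ ((fun x => x + y) ⁻¹' dyadicInterval n j)).toReal) ν :=
    fun j => (integrable_const 1).mono'
      (Real.continuous_negMulLog.measurable.comp (hgmeas j)).aestronglyMeasurable
      (Filter.Eventually.of_forall fun y => by
        rw [Real.norm_eq_abs, abs_of_nonneg (Real.negMulLog_nonneg (hg0 j y) (hg1 j y))]
        exact negMulLog_le_one (hg0 j y))
  have jensen : ∀ j : ℤ,
      (∫ y, Real.negMulLog (μ ((fun x => x + y) ⁻¹' dyadicInterval n j)).toReal ∂ν) ≤
        Real.negMulLog ((convMeasure μ ν (dyadicInterval n j)).toReal) := by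
    intro j
    have hrepr : (convMeasure μ ν (dyadicInterval n j)).toReal =
        ∫ y, (μ ((fun x => x + y) ⁻¹' dyadicInterval n j)).toReal ∂ν := by
      rw [hconv_apply j]
      exact (integral_toReal (measurable_measure_prodMk_right (hsm j)).aemeasurable
        (Filter.Eventually.of_forall fun y => measure_lt_top μ _)).symm
    rw [hrepr]
    exact Real.concaveOn_negMulLog.le_map_integral
      Real.continuous_negMulLog.continuousOn isClosed_Ici
      (Filter.Eventually.of_forall fun y => hg0 j y) (hint_g j) (hint_h j)
  -- support of the convolution
  have hconv_supp : convMeasure μ ν (Set.Icc (-(2*R)) (2*R)) = 1 := by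
    rw [convMeasure, Measure.map_apply hadd measurableSet_Icc]
    refine le_antisymm prob_le_one ?_
    calc (1 : ℝ≥0∞) = (μ.prod ν) (Set.Icc (-R) R ×ˢ Set.Icc (-R) R) := by
          rw [Measure.prod_prod, hμs, hνs, one_mul]
      _ ≤ (μ.prod ν) ((fun p : ℝ × ℝ => p.1 + p.2) ⁻¹' Set.Icc (-(2*R)) (2*R)) := by
          apply measure_mono
          rintro ⟨x, y⟩ ⟨hx, hy⟩
          simp only [Set.mem_preimage, Set.mem_Icc] at *
          constructor <;> [linarith [hx.1, hy.1]; linarith [hx.2, hy.2]]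
  set F : Finset ℤ := Finset.Icc ⌊(2^n:ℝ) * (-(2*R))⌋ ⌊(2^n:ℝ) * (2*R)⌋ with hF
  have hd0 : ∀ j ∉ F, (convMeasure μ ν (dyadicInterval n j)).toReal = 0 := by
    intro j hj
    have h0 : convMeasure μ ν (dyadicInterval n j) = 0 := by
      by_contra hne
      obtain ⟨z, hz1, hz2⟩ := nonempty_inter_of_ne_zero hconv_supp hne
      exact hj (mem_floorIcc_of_mem hz1 hz2.1 hz2.2)
    rw [h0]; simp
  have hEnt : dyadicEntropy n (convMeasure μ ν) =
      ∑ j ∈ F, Real.negMulLog ((convMeasure μ ν (dyadicInterval n j)).toReal) := by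
    rw [dyadicEntropy]
    exact tsum_eq_sum (fun j hj => by rw [hd0 j hj]; simp)
  have haey : ∀ᵐ y ∂ν, y ∈ Set.Icc (-R) R := by
    rw [ae_iff]
    have he : {y : ℝ | ¬ y ∈ Set.Icc (-R) R} = (Set.Icc (-R) R)ᶜ := rfl
    rw [he, measure_compl measurableSet_Icc (measure_ne_top ν _), hνs, measure_univ, tsub_self]
  have key : ∀ y ∈ Set.Icc (-R) R, dyadicEntropy n μ - Real.log 2 ≤
      ∑ j ∈ F, Real.negMulLog (μ ((fun x => x + y) ⁻¹' dyadicInterval n j)).toReal := by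
    intro y hy
    have h0 : ∀ j ∉ F,
        Real.negMulLog (μ ((fun x => x + y) ⁻¹' dyadicInterval n j)).toReal = 0 := by
      intro j hj
      have hz : μ ((fun x => x + y) ⁻¹' dyadicInterval n j) = 0 := by
        by_contra hne
        obtain ⟨x, hx1, hx2⟩ := nonempty_inter_of_ne_zero hμs hne
        apply hj
        have hmem : x + y ∈ dyadicInterval n j := hx1
        refine mem_floorIcc_of_mem hmem ?_ ?_
        · obtain ⟨h1, h2⟩ := hx2; obtain ⟨h3, h4⟩ := hy; linarith
        · obtain ⟨h1, h2⟩ := hx2; obtain ⟨h3, h4⟩ := hy; linarith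
      rw [hz]; simp
    rw [← tsum_eq_sum (L := SummationFilter.unconditional ℤ) h0]
    exact translate_entropy_ge μ hμs n y
  calc dyadicEntropy n μ - Real.log 2
      = ∫ _, (dyadicEntropy n μ - Real.log 2) ∂ν := by simp
    _ ≤ ∫ y, ∑ j ∈ F, Real.negMulLog
          (μ ((fun x => x + y) ⁻¹' dyadicInterval n j)).toReal ∂ν := by
        refine integral_mono_ae (integrable_const _)
          (integrable_finset_sum F fun j _ => hint_h j) ?_
        filter_upwards [haey] with y hy
        exact key y hy
    _ = ∑ j ∈ F, ∫ y, Real.negMulLog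
          (μ ((fun x => x + y) ⁻¹' dyadicInterval n j)).toReal ∂ν :=
        integral_finset_sum F fun j _ => hint_h j
    _ ≤ ∑ j ∈ F, Real.negMulLog ((convMeasure μ ν (dyadicInterval n j)).toReal) :=
        Finset.sum_le_sum fun j _ => jensen j
    _ = dyadicEntropy n (convMeasure μ ν) := hEnt.symm
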